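/- Let n ≥ 1 and r ∈ (0,1), and define f_n(θ) = cot(nθ) + ((1−r)/(1+r))·cot(θ/2) for θ ∈ [(2n−1)π/(2n), π). Then f_n is strictly decreasing on this interval, f_n((2n−1)π/(2n)) = ((1−r)/(1+r))·cot((2n−1)π/(4n)) > 0, f_n(θ) → −∞ as θ → π⁻, and consequently there exists a unique θ* ∈ [(2n−1)π/(2n), π) with f_n(θ*) = 0. -/

import Mathlib

open Real Set Filter

lemma cot_fun_eq : Real.cot = fun x => Real.cos x / Real.sin x :=
  funext fun x => Real.cot_eq_cos_div_sin x

lemma my_hasDerivAt_cot {x : ℝ} (h : Real.sin x ≠ 0) :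
    HasDerivAt Real.cot (-(1 / Real.sin x ^ 2)) x := by
  rw [cot_fun_eq]
  have hd : HasDerivAt (fun y => Real.cos y / Real.sin y) _ x := (Real.hasDerivAt_cos x).div (Real.hasDerivAt_sin x) h
  convert hd using 1
  have hs := Real.sin_sq_add_cos_sq x
  field_simp
  nlinarith [hs]

lemma cot_periodic : Function.Periodic Real.cot Real.pi := by
  intro x
  rw [Real.cot_eq_cos_div_sin, Real.cot_eq_cos_div_sin, Real.sin_add_pi, Real.cos_add_pi,
    neg_div_neg_eq]

lemma tendsto_cot_zero_left : Tendsto Real.cot (nhdsWithin 0 (Iio 0)) atBot := by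
  have h1 : Tendsto (fun u : ℝ => -Real.sin u) (nhdsWithin 0 (Iio 0)) (nhdsWithin 0 (Ioi 0)) := by
    apply tendsto_nhdsWithin_of_tendsto_nhds_of_eventually_within
    · simpa using ((Real.continuous_sin.tendsto 0).neg).mono_left nhdsWithin_le_nhds
    · filter_upwards [Ioo_mem_nhdsLT_of_mem (show (0:ℝ) ∈ Ioc (-Real.pi) 0 from
        ⟨by linarith [Real.pi_pos], le_refl 0⟩)] with u hu
      have := Real.sin_neg_of_neg_of_neg_pi_lt hu.2 hu.1
      simpa using this
  have h2 : Tendsto (fun u : ℝ => (-Real.sin u)⁻¹) (nhdsWithin 0 (Iio 0)) atTop :=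
    tendsto_inv_nhdsGT_zero.comp h1
  have h3 : Tendsto (fun u : ℝ => Real.cos u * (-Real.sin u)⁻¹) (nhdsWithin 0 (Iio 0)) atTop := by
    apply Filter.Tendsto.pos_mul_atTop one_pos ?_ h2
    have : Tendsto Real.cos (nhdsWithin 0 (Iio 0)) (nhds (Real.cos 0)) :=
      (Real.continuous_cos.tendsto 0).mono_left nhdsWithin_le_nhds
    simpa using this
  have h4 : Tendsto (fun u : ℝ => -(Real.cos u * (-Real.sin u)⁻¹)) (nhdsWithin 0 (Iio 0)) atBot :=
    tendsto_neg_atTop_atBot.comp h3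
  refine h4.congr fun u => ?_
  rw [Real.cot_eq_cos_div_sin, div_eq_mul_inv, inv_neg]
  ring

lemma my_continuousAt_cot {x : ℝ} (h : Real.sin x ≠ 0) : ContinuousAt Real.cot x := by
  rw [cot_fun_eq]
  exact Real.continuous_cos.continuousAt.div Real.continuous_sin.continuousAt h

/-- The function `f_n(θ) = cot(nθ) + ((1-r)/(1+r))·cot(θ/2)`. -/
noncomputable def fcot (n : ℕ) (r : ℝ) (θ : ℝ) : ℝ :=
  Real.cot (n * θ) + ((1 - r) / (1 + r)) * Real.cot (θ / 2)

set_option maxHeartbeats 800000 in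
theorem stmt11 (n : ℕ) (hn : 1 ≤ n) (r : ℝ) (hr : r ∈ Set.Ioo (0 : ℝ) 1) :
    StrictAntiOn (fcot n r) (Set.Ico ((2 * n - 1) * Real.pi / (2 * n)) Real.pi) ∧
      fcot n r ((2 * n - 1) * Real.pi / (2 * n)) =
        ((1 - r) / (1 + r)) * Real.cot ((2 * n - 1) * Real.pi / (4 * n)) ∧
      0 < fcot n r ((2 * n - 1) * Real.pi / (2 * n)) ∧
      Filter.Tendsto (fcot n r) (nhdsWithin Real.pi (Set.Iio Real.pi)) Filter.atBot ∧
      ∃! θ : ℝ, θ ∈ Set.Ico ((2 * n - 1) * Real.pi / (2 * n)) Real.pi ∧ fcot n r θ = 0 := by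
  obtain ⟨hr0, hr1⟩ := hr
  have hπ := Real.pi_pos
  have hn0 : (0:ℝ) < n := by exact_mod_cast hn
  have hn1 : (1:ℝ) ≤ n := by exact_mod_cast hn
  set c : ℝ := (1 - r) / (1 + r) with hc
  have hcpos : 0 < c := div_pos (by linarith) (by linarith)
  set a : ℝ := (2 * (n:ℝ) - 1) * Real.pi / (2 * (n:ℝ)) with ha
  have hf : fcot n r = fun θ => Real.cot ((n:ℝ) * θ) + c * Real.cot (θ / 2) := rfl
  have haπ : a = Real.pi - Real.pi / (2 * (n:ℝ)) := by rw [ha]; field_simp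
  have ha_lt : a < Real.pi := by
    rw [haπ]
    have : 0 < Real.pi / (2 * (n:ℝ)) := by positivity
    linarith
  have ha_ge : Real.pi / 2 ≤ a := by
    rw [haπ]
    have h1 : Real.pi / (2 * (n:ℝ)) ≤ Real.pi / 2 := by
      rw [div_le_div_iff₀ (by positivity) two_pos]
      nlinarith
    linarith
  have hna : (n:ℝ) * a = (n:ℝ) * Real.pi - Real.pi / 2 := by rw [ha]; field_simp
  have ha2 : a / 2 = (2 * (n:ℝ) - 1) * Real.pi / (4 * (n:ℝ)) := by
    rw [ha, div_div]
    congr 1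
    ring
  have hsin_half : ∀ θ ∈ Set.Ico a Real.pi, 0 < Real.sin (θ / 2) := by
    intro θ hθ
    exact Real.sin_pos_of_pos_of_lt_pi (by linarith [hθ.1]) (by linarith [hθ.2])
  have hsinn : ∀ θ ∈ Set.Ico a Real.pi, Real.sin ((n:ℝ) * θ) ≠ 0 := by
    intro θ hθ hzero
    obtain ⟨k, hk⟩ := Real.sin_eq_zero_iff.1 hzero
    have hge : (n:ℝ) * a ≤ (n:ℝ) * θ := by nlinarith [hθ.1]
    have hlt : (n:ℝ) * θ < (n:ℝ) * Real.pi := by nlinarith [hθ.2]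
    have h1 : ((n:ℝ) - 1) * Real.pi < (k:ℝ) * Real.pi := by rw [hk]; nlinarith
    have h2 : (k:ℝ) * Real.pi < (n:ℝ) * Real.pi := by rw [hk]; nlinarith
    have h1r : ((n:ℝ) - 1) < (k:ℝ) := lt_of_mul_lt_mul_right h1 (le_of_lt hπ)
    have h2r : (k:ℝ) < (n:ℝ) := lt_of_mul_lt_mul_right h2 (le_of_lt hπ)
    have h1' : ((n:ℤ) - 1 : ℤ) < k := by exact_mod_cast h1r
    have h2' : k < (n:ℤ) := by exact_mod_cast h2r
    omega
  have hD : ∀ θ ∈ Set.Ico a Real.pi, HasDerivAt (fcot n r)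
      (-(1 / Real.sin ((n:ℝ) * θ) ^ 2) * (n:ℝ) + c * (-(1 / Real.sin (θ / 2) ^ 2) * (1 / 2))) θ := by
    intro θ hθ
    have hs1 := hsinn θ hθ
    have hs2 := ne_of_gt (hsin_half θ hθ)
    have d1 : HasDerivAt (fun x : ℝ => Real.cot ((n:ℝ) * x))
        (-(1 / Real.sin ((n:ℝ) * θ) ^ 2) * (n:ℝ)) θ := by
      have hin : HasDerivAt (fun x : ℝ => (n:ℝ) * x) (n:ℝ) θ := by
        simpa using (hasDerivAt_id θ).const_mul (n:ℝ)
      exact (my_hasDerivAt_cot hs1).comp θ hin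
    have d2 : HasDerivAt (fun x : ℝ => Real.cot (x / 2))
        (-(1 / Real.sin (θ / 2) ^ 2) * (1 / 2)) θ := by
      have hin : HasDerivAt (fun x : ℝ => x / 2) ((1:ℝ) / 2) θ := by
        simpa using (hasDerivAt_id θ).div_const 2
      exact (my_hasDerivAt_cot hs2).comp θ hin
    rw [hf]
    exact d1.add (d2.const_mul c)
  have hcont : ContinuousOn (fcot n r) (Set.Ico a Real.pi) := fun θ hθ =>
    (hD θ hθ).continuousAt.continuousWithinAt
  have hanti : StrictAntiOn (fcot n r) (Set.Ico a Real.pi) := by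
    apply strictAntiOn_of_deriv_neg (convex_Ico a Real.pi) hcont
    intro x hx
    rw [interior_Ico] at hx
    have hx' : x ∈ Set.Ico a Real.pi := ⟨le_of_lt hx.1, hx.2⟩
    rw [(hD x hx').deriv]
    have e1 : 0 < Real.sin ((n:ℝ) * x) ^ 2 :=
      lt_of_le_of_ne (sq_nonneg _) (Ne.symm (pow_ne_zero 2 (hsinn x hx')))
    have e2 : 0 < Real.sin (x / 2) ^ 2 :=
      lt_of_le_of_ne (sq_nonneg _) (Ne.symm (pow_ne_zero 2 (ne_of_gt (hsin_half x hx'))))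
    have p1 : 0 < 1 / Real.sin ((n:ℝ) * x) ^ 2 := by positivity
    have p2 : 0 < 1 / Real.sin (x / 2) ^ 2 := by positivity
    nlinarith [mul_pos p1 hn0, mul_pos hcpos p2]
  have hcos0 : Real.cos ((n:ℝ) * a) = 0 := by
    rw [hna, Real.cos_eq_zero_iff]
    exact ⟨(n:ℤ) - 1, by push_cast; ring⟩
  have hval : fcot n r a = c * Real.cot ((2 * (n:ℝ) - 1) * Real.pi / (4 * (n:ℝ))) := by
    rw [hf, ← ha2]
    simp only
    rw [Real.cot_eq_cos_div_sin, hcos0, zero_div, zero_add]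
  have hpos : 0 < fcot n r a := by
    rw [hval, ← ha2]
    have hc1 : 0 < Real.cos (a / 2) :=
      Real.cos_pos_of_mem_Ioo ⟨by linarith, by linarith⟩
    have hs1 : 0 < Real.sin (a / 2) :=
      Real.sin_pos_of_pos_of_lt_pi (by linarith) (by linarith)
    rw [Real.cot_eq_cos_div_sin]
    exact mul_pos hcpos (div_pos hc1 hs1)
  have ht1 : Tendsto (fun θ : ℝ => (n:ℝ) * (θ - Real.pi))
      (nhdsWithin Real.pi (Set.Iio Real.pi)) (nhdsWithin 0 (Set.Iio 0)) := by
    apply tendsto_nhdsWithin_of_tendsto_nhds_of_eventually_within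
    · have hcm : Continuous fun θ : ℝ => (n:ℝ) * (θ - Real.pi) := by continuity
      simpa using (hcm.tendsto Real.pi).mono_left nhdsWithin_le_nhds
    · filter_upwards [self_mem_nhdsWithin] with θ hθ
      have hθ' : θ < Real.pi := hθ
      exact mul_neg_of_pos_of_neg hn0 (by linarith)
  have ht2 : Tendsto (fun θ : ℝ => Real.cot ((n:ℝ) * θ))
      (nhdsWithin Real.pi (Set.Iio Real.pi)) atBot := by
    refine (tendsto_cot_zero_left.comp ht1).congr fun θ => ?_
    show Real.cot ((n:ℝ) * (θ - Real.pi)) = Real.cot ((n:ℝ) * θ)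
    have hθeq : (n:ℝ) * θ = (n:ℝ) * (θ - Real.pi) + (n:ℝ) * Real.pi := by ring
    rw [hθeq, cot_periodic.nat_mul n ((n:ℝ) * (θ - Real.pi))]
  have ht3 : Tendsto (fun θ : ℝ => c * Real.cot (θ / 2))
      (nhdsWithin Real.pi (Set.Iio Real.pi)) (nhds (c * Real.cot (Real.pi / 2))) := by
    have hca : ContinuousAt (fun θ : ℝ => c * Real.cot (θ / 2)) Real.pi := by
      have hs : Real.sin (Real.pi / 2) ≠ 0 := by rw [Real.sin_pi_div_two]; norm_num
      have h2 : ContinuousAt (fun θ : ℝ => θ / 2) Real.pi :=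
        (continuous_id.div_const 2).continuousAt
      have hcc : ContinuousAt Real.cot (Real.pi / 2) := my_continuousAt_cot hs
      exact (ContinuousAt.comp (f := fun θ : ℝ => θ / 2) hcc h2).const_mul c
    exact hca.continuousWithinAt.tendsto
  have htb : Tendsto (fcot n r) (nhdsWithin Real.pi (Set.Iio Real.pi)) atBot := by
    rw [hf]
    exact tendsto_atBot_add_right_of_ge' _ (c * Real.cot (Real.pi / 2) + 1) ht2
      (ht3.eventually (eventually_le_nhds (lt_add_one _)))
  refine ⟨hanti, hval, hpos, htb, ?_⟩
  have hev : ∀ᶠ θ in nhdsWithin Real.pi (Set.Iio Real.pi),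
      fcot n r θ < 0 ∧ θ ∈ Set.Ioo a Real.pi := by
    filter_upwards [htb.eventually (eventually_lt_atBot 0),
      Ioo_mem_nhdsLT_of_mem (show Real.pi ∈ Set.Ioc a Real.pi from ⟨ha_lt, le_refl _⟩)]
      with θ h1 h2 using ⟨h1, h2⟩
  obtain ⟨b, hbneg, hbmem⟩ := hev.exists
  have hsub : Set.Icc a b ⊆ Set.Ico a Real.pi := fun x hx =>
    ⟨hx.1, lt_of_le_of_lt hx.2 hbmem.2⟩
  have hivt := intermediate_value_Icc' (le_of_lt hbmem.1) (hcont.mono hsub)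
  obtain ⟨θ, hθmem, hθ0⟩ := hivt ⟨le_of_lt hbneg, le_of_lt hpos⟩
  have hθI : θ ∈ Set.Ico a Real.pi := hsub hθmem
  refine ⟨θ, ⟨hθI, hθ0⟩, ?_⟩
  rintro θ' ⟨hθ'I, h0'⟩
  exact hanti.injOn hθ'I hθI (by rw [h0', hθ0])
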